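/- Fix m ≥ 1. For every m-colored permutation u of [n] with colored descent composition C^(m)(u) = α, and for every composition β covering α in Co^(m), there exist unique i ∈ {0,...,n} and j ∈ {0,...,m−1} such that inserting the letter n+1 with color ω^j after position i of u yields a colored permutation u_{(i,j)} of [n+1] with C^(m)(u_{(i,j)}) = β. Moreover, the m(n+1) colored descent compositions C^(m)(u_{(i,j)}) for 0 ≤ i ≤ n, 0 ≤ j ≤ m−1 are pairwise distinct and are precisely the covers of α. -/

import Mathlib

/-- `CCover m α β` means `β` covers `α` in the poset `Co^(m)` of `m`-colored
compositions (parts are pairs (color, size)).  The covers of `∅` are the `m`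
one-part compositions of `1`; otherwise `β` is obtained from `α` by
(1) adding `1` to a part keeping its color, (2) adding `1` to a part and
splitting it into two parts of the same color, or (3) splitting a part of color
`c` into `(c,h), (c',1), (c,a-h)` with `c' ≠ c`, parts of size `0` being
deleted. -/
def CCover (m : ℕ) (α β : List (Fin m × ℕ)) : Prop :=
  (α = [] ∧ ∃ c : Fin m, β = [(c, 1)]) ∨
  (∃ (l r : List (Fin m × ℕ)) (c : Fin m) (a : ℕ),
      α = l ++ (c, a) :: r ∧ β = l ++ (c, a + 1) :: r) ∨
  (∃ (l r : List (Fin m × ℕ)) (c : Fin m) (a h : ℕ), h < a ∧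
      α = l ++ (c, a) :: r ∧ β = l ++ (c, h + 1) :: (c, a - h) :: r) ∨
  (∃ (l r : List (Fin m × ℕ)) (c c' : Fin m) (a h : ℕ), c' ≠ c ∧ h ≤ a ∧
      α = l ++ (c, a) :: r ∧
      β = l ++ ((if h = 0 then [] else [(c, h)]) ++ (c', 1) ::
            (if h = a then [] else [(c, a - h)])) ++ r)

/-- The colored descent composition of a colored word (a list of
(color, value) pairs): the list of (color, length) pairs of the maximal
increasing constant-color runs. -/
def cdc {m : ℕ} : List (Fin m × ℕ) → List (Fin m × ℕ)
  | [] => []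
  | (c, v) :: rest =>
    match rest, cdc rest with
    | (c₂, v₂) :: _, (c₃, len) :: t =>
        if c = c₂ ∧ v < v₂ then (c, len + 1) :: t else (c, 1) :: (c₃, len) :: t
    | _, _ => [(c, 1)]

/-- The colored word of an `m`-colored permutation `(w, f)` of `[n]`: the letter
in position `i` is the value `w i` with color `f (w i)`. -/
def cword {m n : ℕ} (w : Equiv.Perm (Fin n)) (f : Fin n → Fin m) :
    List (Fin m × ℕ) :=
  (List.finRange n).map fun i => (f (w i), (w i : ℕ))

lemma cdc_eq {m : ℕ} (c : Fin m) (v : ℕ) (rest : List (Fin m × ℕ)) :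
    cdc ((c,v) :: rest) = match rest, cdc rest with
    | (c₂, v₂) :: _, (c₃, len) :: t =>
        if c = c₂ ∧ v < v₂ then (c, len + 1) :: t else (c, 1) :: (c₃, len) :: t
    | _, _ => [(c, 1)] := rfl

lemma cdc_nil {m : ℕ} : cdc (m := m) [] = [] := rfl

lemma cdc_cons {m : ℕ} (c c₂ : Fin m) (v v₂ : ℕ) (rest : List (Fin m × ℕ))
    (a : ℕ) (t : List (Fin m × ℕ)) (h : cdc ((c₂,v₂) :: rest) = (c₂,a) :: t) :
    cdc ((c,v) :: (c₂,v₂) :: rest) =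
      if c = c₂ ∧ v < v₂ then (c, a + 1) :: t else (c,1) :: (c₂,a) :: t := by
  rw [cdc_eq, h]

lemma cdc_struct {m : ℕ} (rest : List (Fin m × ℕ)) (c : Fin m) (v : ℕ) :
    ∃ a t, cdc ((c,v) :: rest) = (c,a) :: t ∧ 1 ≤ a := by
  cases rest with
  | nil => exact ⟨1, [], rfl, le_refl _⟩
  | cons y ys =>
    obtain ⟨c₂, v₂⟩ := y
    cases h : cdc ((c₂,v₂) :: ys) with
    | nil => exact ⟨1, [], by rw [cdc_eq, h], le_refl _⟩
    | cons z t =>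
      obtain ⟨c₃, len⟩ := z
      by_cases hc : c = c₂ ∧ v < v₂
      · exact ⟨len + 1, t, by rw [cdc_eq, h]; simp [hc], by omega⟩
      · exact ⟨1, (c₃,len) :: t, by rw [cdc_eq, h]; simp [hc], le_refl _⟩

/-- structure of `cdc (x :: u)` relative to `cdc u`. -/
lemma cdc_struct' {m : ℕ} (u : List (Fin m × ℕ)) (c : Fin m) (v : ℕ) :
    ∃ a t, cdc ((c,v) :: u) = (c,a) :: t ∧ 1 ≤ a ∧
      ((a = 1 ∧ t = cdc u) ∨ (2 ≤ a ∧ cdc u = (c, a-1) :: t)) := by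
  cases u with
  | nil => exact ⟨1, [], rfl, le_refl _, Or.inl ⟨rfl, rfl⟩⟩
  | cons y ys =>
    obtain ⟨c₂, v₂⟩ := y
    obtain ⟨a₂, t₂, h₂, ha₂⟩ := cdc_struct ys c₂ v₂
    rw [cdc_cons c c₂ v v₂ ys a₂ t₂ h₂]
    by_cases hc : c = c₂ ∧ v < v₂
    · refine ⟨a₂ + 1, t₂, by simp [hc], by omega, Or.inr ⟨by omega, ?_⟩⟩
      rw [h₂]; simp [hc.1]
    · exact ⟨1, (c₂,a₂) :: t₂, by simp [hc], le_refl _, Or.inl ⟨rfl, h₂.symm⟩⟩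

lemma cdc_pos {m : ℕ} (u : List (Fin m × ℕ)) : ∀ p ∈ cdc u, 1 ≤ p.2 := by
  induction u with
  | nil => simp [cdc_nil]
  | cons x u ih =>
    obtain ⟨c, v⟩ := x
    obtain ⟨a, t, h, ha, hd⟩ := cdc_struct' u c v
    rw [h]
    rcases hd with ⟨-, rfl⟩ | ⟨-, hu⟩
    · intro p hp
      rcases List.mem_cons.mp hp with rfl | hp
      · exact ha
      · exact ih p hp
    · intro p hp
      rcases List.mem_cons.mp hp with rfl | hp
      · exact ha
      · exact ih p (hu ▸ List.mem_cons_of_mem _ hp)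

lemma cdc_sum {m : ℕ} (u : List (Fin m × ℕ)) :
    ((cdc u).map Prod.snd).sum = u.length := by
  induction u with
  | nil => simp [cdc_nil]
  | cons x u ih =>
    obtain ⟨c, v⟩ := x
    obtain ⟨a, t, h, ha, hd⟩ := cdc_struct' u c v
    rw [h]
    rcases hd with ⟨rfl, rfl⟩ | ⟨h2, hu⟩
    · simp only [List.map_cons, List.sum_cons, List.length_cons, ← ih]; omega
    · rw [hu] at ih; simp at ih ⊢; omega

/-- prepending the maximum letter. -/
lemma cdc_top {m : ℕ} (u : List (Fin m × ℕ)) (j : Fin m) (n : ℕ)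
    (hv : ∀ x ∈ u, x.2 < n) : cdc ((j,n) :: u) = (j,1) :: cdc u := by
  cases u with
  | nil => rfl
  | cons y ys =>
    obtain ⟨c₂, v₂⟩ := y
    obtain ⟨a₂, t₂, h₂, -⟩ := cdc_struct ys c₂ v₂
    rw [cdc_cons j c₂ n v₂ ys a₂ t₂ h₂, h₂]
    have : ¬ (n < v₂) := by have := hv (c₂, v₂) (by simp); simp at this; omega
    simp [this]

def insC {m : ℕ} (j : Fin m) : ℕ → List (Fin m × ℕ) → List (Fin m × ℕ)
  | _, [] => [(j,1)]
  | i, (c,a) :: r =>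
    if i = 0 then (j,1) :: (c,a) :: r
    else if i < a then
      (if j = c then (c,i+1) :: (c,a-i) :: r else (c,i) :: (j,1) :: (c,a-i) :: r)
    else if i = a then (if j = c then (c,a+1) :: r else (c,a) :: (j,1) :: r)
    else (c,a) :: insC j (i-a) r

lemma insC_zero {m : ℕ} (j : Fin m) (γ : List (Fin m × ℕ)) :
    insC j 0 γ = (j,1) :: γ := by
  cases γ with
  | nil => rfl
  | cons p r => obtain ⟨c,a⟩ := p; simp [insC]

lemma insC_shift {m : ℕ} (j c₂ : Fin m) (i a₂ : ℕ) (t₂ : List (Fin m × ℕ))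
    (hi : 1 ≤ i) :
    ∃ s T, insC j i ((c₂,a₂) :: t₂) = (c₂,s) :: T ∧
      insC j (i+1) ((c₂,a₂+1) :: t₂) = (c₂,s+1) :: T := by
  rcases lt_trichotomy i a₂ with hlt | heq | hgt
  · by_cases hj : j = c₂
    · refine ⟨i+1, (c₂,a₂-i) :: t₂, ?_, ?_⟩
      · simp [insC, hj, hlt, show ¬ i = 0 by omega]
      · simp [insC, hj, show i+1 < a₂+1 by omega]
    · refine ⟨i, (j,1) :: (c₂,a₂-i) :: t₂, ?_, ?_⟩
      · simp [insC, hj, hlt, show ¬ i = 0 by omega]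
      · simp [insC, hj, show i+1 < a₂+1 by omega]
  · subst heq
    by_cases hj : j = c₂
    · refine ⟨i+1, t₂, ?_, ?_⟩
      · simp [insC, hj, show ¬ i = 0 by omega]
      · simp [insC, hj]
    · refine ⟨i, (j,1) :: t₂, ?_, ?_⟩
      · simp [insC, hj, show ¬ i = 0 by omega]
      · simp [insC, hj]
  · refine ⟨a₂, insC j (i - a₂) t₂, ?_, ?_⟩
    · simp [insC, show ¬ i = 0 by omega, show ¬ i < a₂ by omega,
        show ¬ i = a₂ by omega]
    · simp [insC, show ¬ i + 1 < a₂ + 1 by omega, show ¬ i + 1 = a₂ + 1 by omega, show ¬ i = a₂ by omega,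
        show i + 1 - (a₂ + 1) = i - a₂ by omega]

lemma cdc_insert {m : ℕ} (n : ℕ) :
    ∀ (u : List (Fin m × ℕ)) (i : ℕ) (j : Fin m),
      (∀ x ∈ u, x.2 < n) → i ≤ u.length →
      cdc (u.take i ++ (j, n) :: u.drop i) = insC j i (cdc u) := by
  intro u
  induction u with
  | nil =>
    intro i j _ hle
    have : i = 0 := by simpa using hle
    subst this
    show cdc [(j,n)] = insC j 0 []
    rfl
  | cons x u' ih =>
    intro i j hv hv2
    obtain ⟨cx, vx⟩ := x
    have hvx : vx < n := by have := hv (cx,vx) (by simp); simpa using this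
    cases i with
    | zero =>
      rw [insC_zero, List.take_zero, List.drop_zero, List.nil_append]
      exact cdc_top _ j n hv
    | succ i =>
      have hv' : ∀ x ∈ u', x.2 < n := fun x hx => hv x (List.mem_cons_of_mem _ hx)
      have hle' : i ≤ u'.length := by simpa using hv2
      have IH := ih i j hv' hle'
      simp only [List.take_succ_cons, List.drop_succ_cons, List.cons_append]
      by_cases hi0 : i = 0
      · subst hi0
        rw [List.take_zero, List.drop_zero, List.nil_append]
        have hW : cdc ((j,n) :: u') = (j,1) :: cdc u' := cdc_top _ j n hv'
        have hL := cdc_cons cx j vx n u' 1 (cdc u') hW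
        obtain ⟨a, t, hx, ha, hd⟩ := cdc_struct' u' cx vx
        rw [hL, hx]
        rcases hd with ⟨rfl, rfl⟩ | ⟨h2, hu⟩
        · by_cases hj : j = cx
          · simp [insC, hj, hvx]
          · simp [insC, hj, hvx, show ¬ cx = j from fun h => hj h.symm]
        · rw [hu]
          by_cases hj : j = cx
          · simp [insC, hj, hvx, show 1 < a by omega]
          · simp [insC, hj, hvx, show 1 < a by omega,
              show ¬ cx = j from fun h => hj h.symm]
      · obtain ⟨k, rfl⟩ : ∃ k, i = k + 1 := ⟨i - 1, by omega⟩
        obtain ⟨y, u'', rfl⟩ : ∃ y u'', u' = y :: u'' := by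
          cases u' with
          | nil => simp at hle'
          | cons a b => exact ⟨a, b, rfl⟩
        obtain ⟨c₂, v₂⟩ := y
        obtain ⟨a₂, t₂, h₂, ha₂⟩ := cdc_struct u'' c₂ v₂
        obtain ⟨s, T, hs1, hs2⟩ := insC_shift j c₂ (k+1) a₂ t₂ (by omega)
        have hW : cdc (((c₂,v₂) :: u'').take (k+1) ++ (j,n) ::
            ((c₂,v₂) :: u'').drop (k+1)) = (c₂,s) :: T := by rw [IH, h₂, hs1]
        simp only [List.take_succ_cons, List.drop_succ_cons, List.cons_append] at hW ⊢
        have hL := cdc_cons cx c₂ vx v₂ (u''.take k ++ (j,n) :: u''.drop k) s T hW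
        have hR := cdc_cons cx c₂ vx v₂ u'' a₂ t₂ h₂
        rw [hL, hR]
        by_cases P : cx = c₂ ∧ vx < v₂
        · simp only [if_pos P]
          rw [P.1, hs2]
        · simp only [if_neg P]
          rw [show insC j (k+1+1) ((cx,1) :: (c₂,a₂) :: t₂) =
              (cx,1) :: insC j (k+1) ((c₂,a₂) :: t₂) from by
            simp [insC, show ¬ k+1+1 = 0 by omega, show ¬ k+1+1 < 1 by omega,
              show ¬ k+1+1 = 1 by omega], hs1]

lemma ccover_cons {m : ℕ} (p : Fin m × ℕ) {γ β : List (Fin m × ℕ)}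
    (h : CCover m γ β) (hne : γ ≠ []) : CCover m (p :: γ) (p :: β) := by
  rcases h with ⟨h1, -⟩ | ⟨l,r,c,a,h1,h2⟩ | ⟨l,r,c,a,hh,hlt,h1,h2⟩ |
    ⟨l,r,c,c',a,hh,hne',hle,h1,h2⟩
  · exact absurd h1 hne
  · exact Or.inr (Or.inl ⟨p::l, r, c, a, by simp [h1], by simp [h2]⟩)
  · exact Or.inr (Or.inr (Or.inl ⟨p::l, r, c, a, hh, hlt, by simp [h1], by simp [h2]⟩))
  · exact Or.inr (Or.inr (Or.inr ⟨p::l, r, c, c', a, hh, hne', hle, by simp [h1],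
      by simp [h2]⟩))

lemma insC_ccover {m : ℕ} :
    ∀ (γ : List (Fin m × ℕ)) (i : ℕ) (j : Fin m), (∀ p ∈ γ, 1 ≤ p.2) →
      i ≤ (γ.map Prod.snd).sum → CCover m γ (insC j i γ) := by
  intro γ
  induction γ with
  | nil =>
    intro i j _ hle
    have : i = 0 := by simpa using hle
    subst this
    exact Or.inl ⟨rfl, j, rfl⟩
  | cons p r ihr =>
    obtain ⟨c, a⟩ := p
    intro i j hpos hle
    have ha : 1 ≤ a := hpos (c,a) (by simp)
    have hposr : ∀ p ∈ r, 1 ≤ p.2 := fun p hp => hpos p (by simp [hp])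
    have hsum : i ≤ a + (List.map Prod.snd r).sum := by simpa using hle
    by_cases hi0 : i = 0
    · subst hi0
      rw [insC_zero]
      by_cases hj : j = c
      · subst hj
        refine Or.inr (Or.inr (Or.inl ⟨[], r, j, a, 0, by omega, rfl, by simp⟩))
      · exact Or.inr (Or.inr (Or.inr ⟨[], r, c, j, a, 0, hj, by omega, rfl,
          by simp [show ¬ (0 = a) by omega]⟩))
    · by_cases hia : i < a
      · by_cases hj : j = c
        · have E : insC j i ((c,a)::r) = (c,i+1) :: (c,a-i) :: r := by
            simp [insC, hi0, hia, hj]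
          rw [E]
          exact Or.inr (Or.inr (Or.inl ⟨[], r, c, a, i, hia, rfl, by simp⟩))
        · have E : insC j i ((c,a)::r) = (c,i) :: (j,1) :: (c,a-i) :: r := by
            simp [insC, hi0, hia, hj]
          rw [E]
          exact Or.inr (Or.inr (Or.inr ⟨[], r, c, j, a, i, hj, by omega, rfl,
            by simp [hi0, show ¬ (i = a) by omega]⟩))
      · by_cases hiea : i = a
        · subst hiea
          by_cases hj : j = c
          · have E : insC j i ((c,i)::r) = (c,i+1) :: r := by
              simp [insC, hi0, hj]
            rw [E]
            exact Or.inr (Or.inl ⟨[], r, c, i, rfl, rfl⟩)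
          · have E : insC j i ((c,i)::r) = (c,i) :: (j,1) :: r := by
              simp [insC, hi0, hj]
            rw [E]
            exact Or.inr (Or.inr (Or.inr ⟨[], r, c, j, i, i, hj, le_refl _, rfl,
              by simp [hi0]⟩))
        · have E : insC j i ((c,a)::r) = (c,a) :: insC j (i-a) r := by
            simp [insC, hi0, hia, hiea]
          rw [E]
          have hrs : i - a ≤ (List.map Prod.snd r).sum := by omega
          have hrne : r ≠ [] := by
            rintro rfl
            simp at hrs
            omega
          exact ccover_cons (c,a) (ihr (i-a) j hposr hrs) hrne

lemma insC_ne {m : ℕ} :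
    ∀ (γ : List (Fin m × ℕ)) (k : ℕ) (j c : Fin m), (∀ p ∈ γ, 1 ≤ p.2) →
      1 ≤ k → k ≤ (γ.map Prod.snd).sum → insC j k γ ≠ (c,1) :: γ := by
  intro γ
  induction γ with
  | nil => intro k j c _ h1 h2; simp at h2; omega
  | cons p r ih =>
    obtain ⟨c₂, a₂⟩ := p
    intro k j c hpos h1 h2 hEq
    have ha₂ : 1 ≤ a₂ := hpos (c₂,a₂) (by simp)
    have hposr : ∀ p ∈ r, 1 ≤ p.2 := fun p hp => hpos p (by simp [hp])
    have h2' : k ≤ a₂ + (List.map Prod.snd r).sum := by simpa using h2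
    by_cases hk : k < a₂
    · by_cases hj : j = c₂ <;>
        simp [insC, show ¬ k = 0 by omega, hk, hj] at hEq <;> omega
    · by_cases hk2 : k = a₂
      · subst hk2
        by_cases hj : j = c₂ <;>
          simp [insC, show ¬ k = 0 by omega, hj] at hEq <;> omega
      · simp [insC, show ¬ k = 0 by omega, hk, hk2] at hEq
        obtain ⟨⟨hc, ha1⟩, hrec⟩ := hEq
        subst ha1
        exact ih (k - 1) j c₂ hposr (by omega) (by omega) hrec

set_option maxHeartbeats 1000000 in
lemma insC_inj {m : ℕ} :
    ∀ (γ : List (Fin m × ℕ)) (i i' : ℕ) (j j' : Fin m), (∀ p ∈ γ, 1 ≤ p.2) →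
      i ≤ (γ.map Prod.snd).sum → i' ≤ (γ.map Prod.snd).sum →
      insC j i γ = insC j' i' γ → i = i' ∧ j = j' := by
  intro γ
  induction γ with
  | nil =>
    intro i i' j j' _ h h' hEq
    simp at h h'
    subst h; subst h'
    simp [insC] at hEq
    exact ⟨rfl, hEq⟩
  | cons p r ih =>
    obtain ⟨c, a⟩ := p
    intro i i' j j' hpos hle hle' hEq
    have ha : 1 ≤ a := hpos (c,a) (by simp)
    have hposr : ∀ p ∈ r, 1 ≤ p.2 := fun p hp => hpos p (by simp [hp])
    have hs : i ≤ a + (List.map Prod.snd r).sum := by simpa using hle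
    have hs' : i' ≤ a + (List.map Prod.snd r).sum := by simpa using hle'
    simp only [insC] at hEq
    split_ifs at hEq
    all_goals simp only [List.cons.injEq, Prod.mk.injEq, true_and, and_true] at hEq
    all_goals try (obtain ⟨-, hEq2⟩ := hEq
                   have h12 := ih (i-a) (i'-a) j j' hposr (by omega) (by omega)
                   exact ⟨by omega, (h12 hEq2).2⟩)
    all_goals try (exact absurd hEq.2 (insC_ne r (i-a) j j' hposr (by omega) (by omega)))
    all_goals try (exact absurd hEq.2.symm (insC_ne r (i'-a) j' j hposr (by omega) (by omega)))
    all_goals try (obtain ⟨⟨-, h1a⟩, hEq2⟩ := hEq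
                   subst h1a
                   exact absurd hEq2.symm (insC_ne r (i'-1) j' c hposr (by omega) (by omega)))
    all_goals try (obtain ⟨⟨-, h1a⟩, hEq2⟩ := hEq
                   subst h1a
                   exact absurd hEq2 (insC_ne r (i-1) j c hposr (by omega) (by omega)))
    all_goals try (exact absurd hEq (insC_ne r (i-a) j j' hposr (by omega) (by omega)))
    all_goals try (exact absurd hEq.symm (insC_ne r (i'-a) j' j hposr (by omega) (by omega)))
    all_goals try (obtain ⟨h1a, hEq2⟩ := hEq
                   rw [show a - i = 1 by omega] at hEq2
                   exact absurd hEq2.symm (insC_ne r (i'-a) j' c hposr (by omega) (by omega)))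
    all_goals try (obtain ⟨h1a, hEq2⟩ := hEq
                   rw [show a - i' = 1 by omega] at hEq2
                   exact absurd hEq2 (insC_ne r (i-a) j c hposr (by omega) (by omega)))
    all_goals try (have h12 := ih (i-a) (i'-a) j j' hposr (by omega) (by omega)
                   refine ⟨?_, (h12 hEq).2⟩
                   have h13 := (h12 hEq).1
                   omega)
    all_goals clear ih
    all_goals try (exfalso; omega)
    all_goals try exact ⟨by omega, by simp_all⟩
    all_goals try (exfalso; simp_all; omega)


lemma reach_cons {m : ℕ} (c₀ : Fin m) (a₀ : ℕ) (ha₀ : 1 ≤ a₀)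
    {δ β : List (Fin m × ℕ)}
    (h : ∃ i j, i ≤ (δ.map Prod.snd).sum ∧ insC j i δ = β) :
    ∃ i j, i ≤ ((((c₀,a₀) :: δ)).map Prod.snd).sum ∧
      insC j i ((c₀,a₀) :: δ) = (c₀,a₀) :: β := by
  obtain ⟨i, j, hle, rfl⟩ := h
  by_cases hi : 1 ≤ i
  · refine ⟨a₀ + i, j, by simp; omega, ?_⟩
    simp [insC, show ¬ (a₀ + i = 0) by omega, show ¬ (a₀ + i < a₀) by omega,
      show ¬ (a₀ + i = a₀) by omega, show a₀ + i - a₀ = i by omega, show ¬ i = 0 by omega]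
  · have hi0 : i = 0 := by omega
    subst hi0
    rw [insC_zero]
    by_cases hj : j = c₀
    · subst hj
      by_cases ha1 : a₀ = 1
      · subst ha1
        exact ⟨0, j, by simp, by rw [insC_zero]⟩
      · refine ⟨a₀ - 1, j, by simp; omega, ?_⟩
        have E : insC j (a₀-1) ((j,a₀) :: δ) =
            (j, (a₀-1)+1) :: (j, a₀-(a₀-1)) :: δ := by
          simp [insC, show ¬ (a₀ - 1 = 0) by omega, show a₀ - 1 < a₀ by omega]
        rw [E, show a₀ - 1 + 1 = a₀ by omega, show a₀ - (a₀-1) = 1 by omega]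
    · refine ⟨a₀, j, by simp, ?_⟩
      simp [insC, show ¬ (a₀ = 0) by omega, hj]

lemma reach_append {m : ℕ} :
    ∀ (l : List (Fin m × ℕ)), (∀ p ∈ l, 1 ≤ p.2) →
    ∀ {δ β : List (Fin m × ℕ)},
      (∃ i j, i ≤ (δ.map Prod.snd).sum ∧ insC j i δ = β) →
      ∃ i j, i ≤ ((l ++ δ).map Prod.snd).sum ∧ insC j i (l ++ δ) = l ++ β := by
  intro l
  induction l with
  | nil => intro _ δ β h; simpa using h
  | cons p l ihl =>
    obtain ⟨c₀, a₀⟩ := p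
    intro hpos δ β h
    have := reach_cons c₀ a₀ (hpos (c₀,a₀) (by simp))
      (ihl (fun p hp => hpos p (by simp [hp])) h)
    simpa using this

lemma ccover_reach {m : ℕ} (γ β : List (Fin m × ℕ)) (hpos : ∀ p ∈ γ, 1 ≤ p.2)
    (h : CCover m γ β) :
    ∃ i j, i ≤ (γ.map Prod.snd).sum ∧ insC j i γ = β := by
  rcases h with ⟨rfl, c, rfl⟩ | ⟨l,r,c,a,rfl,rfl⟩ | ⟨l,r,c,a,hh,hlt,rfl,rfl⟩ |
    ⟨l,r,c,c',a,hh,hne,hle,rfl,rfl⟩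
  · exact ⟨0, c, by simp, by rw [insC_zero]⟩
  · have ha : 1 ≤ a := hpos (c,a) (by simp)
    exact reach_append l (fun p hp => hpos p (by simp [hp]))
      ⟨a, c, by simp, by simp [insC, show ¬ (a = 0) by omega]⟩
  · have ha : 1 ≤ a := hpos (c,a) (by simp)
    by_cases hh0 : hh = 0
    · subst hh0
      refine reach_append l (fun p hp => hpos p (by simp [hp])) ⟨0, c, by simp, ?_⟩
      rw [insC_zero]
      simp
    · refine reach_append l (fun p hp => hpos p (by simp [hp])) ⟨hh, c, ?_, ?_⟩
      · simp; omega
      · simp [insC, hh0, hlt]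
  · have ha : 1 ≤ a := hpos (c,a) (by simp)
    rw [List.append_assoc]
    by_cases hh0 : hh = 0
    · subst hh0
      refine reach_append l (fun p hp => hpos p (by simp [hp])) ⟨0, c', by simp, ?_⟩
      rw [insC_zero]
      simp [show ¬ (0 = a) by omega]
    · by_cases hha : hh = a
      · subst hha
        refine reach_append l (fun p hp => hpos p (by simp [hp]))
          ⟨hh, c', by simp, ?_⟩
        simp [insC, hh0, hne]
      · refine reach_append l (fun p hp => hpos p (by simp [hp]))
          ⟨hh, c', by simp; omega, ?_⟩
        simp [insC, hh0, hne, hha, show hh < a by omega]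

/-- For an `m`-colored permutation `u = (w, f)` of `[n]` with colored descent
composition `α = C^(m)(u)`: inserting the largest new letter (value `n`) with
color `j` after position `i` always produces a cover of `α`; the resulting
`m(n+1)` colored descent compositions are pairwise distinct; and every cover
`β` of `α` arises from a unique such insertion `(i, j)`. -/
theorem covers_from_insertions (m n : ℕ) (hm : 1 ≤ m)
    (w : Equiv.Perm (Fin n)) (f : Fin n → Fin m) :
    (∀ (i : Fin (n + 1)) (j : Fin m),
      CCover m (cdc (cword w f))
        (cdc ((cword w f).take (i : ℕ) ++ (j, n) :: (cword w f).drop (i : ℕ)))) ∧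
    Function.Injective (fun p : Fin (n + 1) × Fin m =>
      cdc ((cword w f).take (p.1 : ℕ) ++ (p.2, n) :: (cword w f).drop (p.1 : ℕ))) ∧
    (∀ β, CCover m (cdc (cword w f)) β →
      ∃! p : Fin (n + 1) × Fin m,
        cdc ((cword w f).take (p.1 : ℕ) ++ (p.2, n) :: (cword w f).drop (p.1 : ℕ)) = β) := by
  have hlen : (cword w f).length = n := by simp [cword]
  have hval : ∀ x ∈ cword w f, x.2 < n := by
    intro x hx
    obtain ⟨i, -, rfl⟩ := List.mem_map.mp hx
    exact (w i).isLt
  have hpos := cdc_pos (cword w f)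
  have hsum : ((cdc (cword w f)).map Prod.snd).sum = n := by
    rw [cdc_sum, hlen]
  refine ⟨?_, ?_, ?_⟩
  · intro i j
    rw [cdc_insert n (cword w f) (i : ℕ) j hval
      (by rw [hlen]; exact Nat.lt_succ_iff.mp i.isLt)]
    exact insC_ccover _ (i : ℕ) j hpos (by rw [hsum]; exact Nat.lt_succ_iff.mp i.isLt)
  · intro p q hpq
    simp only at hpq
    rw [cdc_insert n _ _ _ hval (by rw [hlen]; exact Nat.lt_succ_iff.mp p.1.isLt),
        cdc_insert n _ _ _ hval (by rw [hlen]; exact Nat.lt_succ_iff.mp q.1.isLt)] at hpq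
    obtain ⟨h1, h2⟩ := insC_inj _ _ _ _ _ hpos
      (by rw [hsum]; exact Nat.lt_succ_iff.mp p.1.isLt)
      (by rw [hsum]; exact Nat.lt_succ_iff.mp q.1.isLt) hpq
    obtain ⟨p1, p2⟩ := p
    obtain ⟨q1, q2⟩ := q
    simp only [Prod.mk.injEq]
    exact ⟨Fin.ext h1, h2⟩
  · intro β hβ
    obtain ⟨i, j, hle, hins⟩ := ccover_reach _ β hpos hβ
    rw [hsum] at hle
    refine ⟨(⟨i, by omega⟩, j), ?_, ?_⟩
    · simp only
      rw [cdc_insert n _ _ _ hval (by rw [hlen]; exact hle)]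
      exact hins
    · rintro ⟨q1, q2⟩ hq
      simp only at hq
      rw [cdc_insert n _ _ _ hval (by rw [hlen]; exact Nat.lt_succ_iff.mp q1.isLt)] at hq
      obtain ⟨h1, h2⟩ := insC_inj _ q1 i q2 j hpos
        (by rw [hsum]; exact Nat.lt_succ_iff.mp q1.isLt) (by rw [hsum]; exact hle)
        (hq.trans hins.symm)
      simp only [Prod.mk.injEq]
      exact ⟨Fin.ext h1, h2⟩
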